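/- In the stacked-book graph G_{m,5} = S_m □ P_5 with m ≥ 3, if an induced matching M saturates the central vertex of the middle layer S_m(3), then |M| ≤ 2m - 3. -/

import Mathlib

open SimpleGraph

/-- The star graph on `m` vertices: vertex `0` is the center, the rest are leaves. -/
def starGraph (m : ℕ) : SimpleGraph (Fin m) :=
  SimpleGraph.fromRel (fun i _ => i.val = 0)

/-- `M` is an induced matching of `G`: every element of `M` is an edge of `G`, and no two
distinct edges of `M` share an endpoint or have endpoints joined by an edge of `G`. -/
def IsInducedMatching {V : Type*} (G : SimpleGraph V) (M : Finset (Sym2 V)) : Prop :=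
  ↑M ⊆ G.edgeSet ∧
    ∀ e₁ ∈ M, ∀ e₂ ∈ M, e₁ ≠ e₂ → ∀ u ∈ e₁, ∀ v ∈ e₂, u ≠ v ∧ ¬G.Adj u v

/-- The maximum induced matching number of `G`. -/
noncomputable def im {V : Type*} (G : SimpleGraph V) : ℕ :=
  sSup {k | ∃ M : Finset (Sym2 V), IsInducedMatching G M ∧ M.card = k}

/-- The stacked-book graph `G_{m,n} = S_m □ P_n`. -/
def stackedBook (m n : ℕ) : SimpleGraph (Fin m × Fin n) :=
  starGraph m □ SimpleGraph.pathGraph n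

lemma sb_adj {m : ℕ} (a b : Fin m × Fin 5) :
    (stackedBook m 5).Adj a b ↔
      (a.1 ≠ b.1 ∧ (a.1.val = 0 ∨ b.1.val = 0) ∧ a.2 = b.2) ∨
      (a.1 = b.1 ∧ (a.2.val + 1 = b.2.val ∨ b.2.val + 1 = a.2.val)) := by
  rw [stackedBook, boxProd_adj, pathGraph_adj]
  rw [_root_.starGraph, fromRel_adj]
  tauto

noncomputable def rowMin {m : ℕ} : Sym2 (Fin m × Fin 5) → Fin m :=
  Sym2.lift ⟨fun a b => min a.1 b.1, fun _ _ => min_comm _ _⟩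

@[simp] lemma rowMin_mk {m : ℕ} (a b : Fin m × Fin 5) : rowMin s(a,b) = min a.1 b.1 := rfl

lemma side_card {m : ℕ} (M' : Finset (Sym2 (Fin m × Fin 5)))
    (z0 : Fin m) (hz0 : z0.val = 0) (x y : Fin 5)
    (hshape : ∀ e ∈ M', ((z0, x) ∈ e ∨ ∃ i : Fin m, i.val ≠ 0 ∧ e = s((i,x),(i,y))))
    (hpair : ∀ e₁ ∈ M', ∀ e₂ ∈ M', e₁ ≠ e₂ → ∀ u ∈ e₁, ∀ v ∈ e₂,
        u ≠ v ∧ ¬(stackedBook m 5).Adj u v)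
    (S : Finset (Fin m)) (hS : ∀ i : Fin m, i.val ≠ 0 → s((i,x),(i,y)) ∈ M' → i ∈ S)
    (h1S : 1 ≤ S.card) :
    M'.card ≤ S.card := by
  classical
  by_cases hstar : ∃ e ∈ M', (z0, x) ∈ e
  · obtain ⟨e, he, hze⟩ := hstar
    have hsub : M' ⊆ {e} := by
      intro e' he'
      simp only [Finset.mem_singleton]
      by_contra hne
      rcases hshape e' he' with hz | ⟨i, hi0, rfl⟩
      · exact ((hpair e' he' e he hne _ hz _ hze).1 rfl)
      · have hadj : (stackedBook m 5).Adj (i, x) (z0, x) := by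
          rw [sb_adj]
          left
          refine ⟨?_, Or.inr hz0, rfl⟩
          intro h; exact hi0 (by simpa [hz0] using congrArg Fin.val h)
        exact (hpair _ he' e he hne (i,x) (by simp) _ hze).2 hadj
    calc M'.card ≤ ({e} : Finset _).card := Finset.card_le_card hsub
      _ = 1 := Finset.card_singleton e
      _ ≤ S.card := h1S
  · push_neg at hstar
    apply Finset.card_le_card_of_injOn rowMin
    · intro e he
      rcases hshape e he with hz | ⟨i, hi0, rfl⟩
      · exact absurd hz (hstar e he)
      · simpa using hS i hi0 he
    · intro e₁ h₁ e₂ h₂ hf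
      rcases hshape e₁ h₁ with hz | ⟨i, hi0, rfl⟩
      · exact absurd hz (hstar e₁ h₁)
      rcases hshape e₂ h₂ with hz | ⟨j, hj0, rfl⟩
      · exact absurd hz (hstar e₂ h₂)
      simp only [rowMin_mk, min_self] at hf
      rw [hf]

theorem card_le_of_middle_center_saturated_five (m : ℕ) (hm : 3 ≤ m)
    (M : Finset (Sym2 (Fin m × Fin 5))) (hM : IsInducedMatching (stackedBook m 5) M)
    (hsat : ∃ e ∈ M, ((⟨0, by omega⟩ : Fin m), (2 : Fin 5)) ∈ e) :
    M.card ≤ 2 * m - 3 := by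
  classical
  obtain ⟨hsub, hind⟩ := hM
  set z0 : Fin m := ⟨0, by omega⟩ with hz0def
  have hz0 : z0.val = 0 := rfl
  set c : Fin m × Fin 5 := (z0, 2) with hcdef
  obtain ⟨e0, he0, hce⟩ := hsat
  obtain ⟨w, hw⟩ := Sym2.mem_iff_exists.mp hce
  have hwmem : w ∈ e0 := by rw [hw]; exact Sym2.mem_mk_right c w
  have hcw : (stackedBook m 5).Adj c w := by
    have h := hsub he0
    rw [hw] at h
    exact h
  have key : ∀ e ∈ M, e ≠ e0 → ∀ u ∈ e,
      (u ≠ c ∧ ¬(stackedBook m 5).Adj u c) ∧ (u ≠ w ∧ ¬(stackedBook m 5).Adj u w) := by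
    intro e he hne u hu
    exact ⟨hind e he e0 he0 hne u hu c hce, hind e he e0 he0 hne u hu w hwmem⟩
  -- no vertex of another edge lies in layer 2
  have hlayer2 : ∀ e ∈ M, e ≠ e0 → ∀ u ∈ e, u.2.val ≠ 2 := by
    intro e he hne u hu h2
    rcases key e he hne u hu with ⟨⟨hne_c, hnadj⟩, _⟩
    by_cases h0 : u.1.val = 0
    · exact hne_c (Prod.ext (Fin.ext (by simpa [hz0] using h0)) (Fin.ext (by rw [h2]; rfl)))
    · apply hnadj
      rw [sb_adj]
      left
      exact ⟨fun h => h0 (by rw [h]), Or.inr hz0, Fin.ext (by rw [h2]; rfl)⟩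
  -- (z0,1) and (z0,3) are in no other edge
  have h01 : ∀ e ∈ M, e ≠ e0 → ((z0,(1:Fin 5)) ∉ e ∧ (z0,(3:Fin 5)) ∉ e) := by
    intro e he hne
    constructor
    · intro hmem
      apply (key e he hne _ hmem).1.2
      rw [sb_adj]; right; exact ⟨rfl, Or.inl rfl⟩
    · intro hmem
      apply (key e he hne _ hmem).1.2
      rw [sb_adj]; right; exact ⟨rfl, Or.inr rfl⟩
  -- shape of edges on the left side
  have shapeL : ∀ e ∈ M, e ≠ e0 → (∀ v ∈ e, v.2.val ≤ 1) →
      ((z0,(0:Fin 5)) ∈ e ∨ ∃ i : Fin m, i.val ≠ 0 ∧ e = s((i,(0:Fin 5)),(i,(1:Fin 5)))) := by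
    intro e
    induction e using Sym2.ind with
    | _ a b =>
    intro he hne hall
    have hab : (stackedBook m 5).Adj a b := hsub he
    have hale : a.2.val ≤ 1 := hall a (Sym2.mem_mk_left a b)
    have hble : b.2.val ≤ 1 := hall b (Sym2.mem_mk_right a b)
    have h01a := h01 _ he hne
    rw [sb_adj] at hab
    rcases hab with ⟨hne1, hc0, h2eq⟩ | ⟨h1eq, hstep⟩
    · -- star edge in layer a.2
      have hval : a.2.val = 0 ∨ a.2.val = 1 := by omega
      rcases hval with h0 | h1
      · left
        rcases hc0 with h | h
        · have : a = (z0, (0:Fin 5)) := Prod.ext (Fin.ext (by simpa [hz0] using h)) (Fin.ext (by simpa using h0))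
          rw [← this]; exact Sym2.mem_mk_left a b
        · have : b = (z0, (0:Fin 5)) := Prod.ext (Fin.ext (by simpa [hz0] using h))
            (Fin.ext (by rw [← h2eq]; simpa using h0))
          rw [← this]; exact Sym2.mem_mk_right a b
      · exfalso
        rcases hc0 with h | h
        · exact h01a.1 (by
            have : a = (z0, (1:Fin 5)) := Prod.ext (Fin.ext (by simpa [hz0] using h)) (Fin.ext (by simpa using h1))
            rw [← this]; exact Sym2.mem_mk_left a b)
        · exact h01a.1 (by
            have : b = (z0, (1:Fin 5)) := Prod.ext (Fin.ext (by simpa [hz0] using h))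
              (Fin.ext (by rw [← h2eq]; simpa using h1))
            rw [← this]; exact Sym2.mem_mk_right a b)
    · -- vertical edge
      have hval : (a.2.val = 0 ∧ b.2.val = 1) ∨ (a.2.val = 1 ∧ b.2.val = 0) := by omega
      by_cases h0 : a.1.val = 0
      · exfalso
        apply h01a.1
        rcases hval with ⟨_, hb1⟩ | ⟨ha1, _⟩
        · have : b = (z0, (1:Fin 5)) := Prod.ext (Fin.ext (by rw [← h1eq]; simpa [hz0] using h0))
            (Fin.ext (by simpa using hb1))
          rw [← this]; exact Sym2.mem_mk_right a b
        · have : a = (z0, (1:Fin 5)) := Prod.ext (Fin.ext (by simpa [hz0] using h0))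
            (Fin.ext (by simpa using ha1))
          rw [← this]; exact Sym2.mem_mk_left a b
      · right
        refine ⟨a.1, h0, ?_⟩
        rcases hval with ⟨ha0, hb1⟩ | ⟨ha1, hb0⟩
        · apply Sym2.eq_iff.mpr
          left
          exact ⟨Prod.ext rfl (Fin.ext (by simpa using ha0)),
            Prod.ext h1eq.symm (Fin.ext (by simpa using hb1))⟩
        · apply Sym2.eq_iff.mpr
          right
          exact ⟨Prod.ext rfl (Fin.ext (by simpa using ha1)),
            Prod.ext h1eq.symm (Fin.ext (by simpa using hb0))⟩
  -- shape of edges on the right side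
  have shapeR : ∀ e ∈ M, e ≠ e0 → (∀ v ∈ e, 3 ≤ v.2.val) →
      ((z0,(4:Fin 5)) ∈ e ∨ ∃ i : Fin m, i.val ≠ 0 ∧ e = s((i,(4:Fin 5)),(i,(3:Fin 5)))) := by
    intro e
    induction e using Sym2.ind with
    | _ a b =>
    intro he hne hall
    have hab : (stackedBook m 5).Adj a b := hsub he
    have hale : 3 ≤ a.2.val := hall a (Sym2.mem_mk_left a b)
    have hble : 3 ≤ b.2.val := hall b (Sym2.mem_mk_right a b)
    have halt : a.2.val < 5 := a.2.isLt
    have hblt : b.2.val < 5 := b.2.isLt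
    have h01a := h01 _ he hne
    rw [sb_adj] at hab
    rcases hab with ⟨hne1, hc0, h2eq⟩ | ⟨h1eq, hstep⟩
    · have hval : a.2.val = 4 ∨ a.2.val = 3 := by omega
      rcases hval with h0 | h1
      · left
        rcases hc0 with h | h
        · have : a = (z0, (4:Fin 5)) := Prod.ext (Fin.ext (by simpa [hz0] using h)) (Fin.ext (by simpa using h0))
          rw [← this]; exact Sym2.mem_mk_left a b
        · have : b = (z0, (4:Fin 5)) := Prod.ext (Fin.ext (by simpa [hz0] using h))
            (Fin.ext (by rw [← h2eq]; simpa using h0))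
          rw [← this]; exact Sym2.mem_mk_right a b
      · exfalso
        rcases hc0 with h | h
        · exact h01a.2 (by
            have : a = (z0, (3:Fin 5)) := Prod.ext (Fin.ext (by simpa [hz0] using h)) (Fin.ext (by simpa using h1))
            rw [← this]; exact Sym2.mem_mk_left a b)
        · exact h01a.2 (by
            have : b = (z0, (3:Fin 5)) := Prod.ext (Fin.ext (by simpa [hz0] using h))
              (Fin.ext (by rw [← h2eq]; simpa using h1))
            rw [← this]; exact Sym2.mem_mk_right a b)
    · have hval : (a.2.val = 3 ∧ b.2.val = 4) ∨ (a.2.val = 4 ∧ b.2.val = 3) := by omega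
      by_cases h0 : a.1.val = 0
      · exfalso
        apply h01a.2
        rcases hval with ⟨ha3, _⟩ | ⟨_, hb3⟩
        · have : a = (z0, (3:Fin 5)) := Prod.ext (Fin.ext (by simpa [hz0] using h0))
            (Fin.ext (by simpa using ha3))
          rw [← this]; exact Sym2.mem_mk_left a b
        · have : b = (z0, (3:Fin 5)) := Prod.ext (Fin.ext (by rw [← h1eq]; simpa [hz0] using h0))
            (Fin.ext (by simpa using hb3))
          rw [← this]; exact Sym2.mem_mk_right a b
      · right
        refine ⟨a.1, h0, ?_⟩
        rcases hval with ⟨ha3, hb4⟩ | ⟨ha4, hb3⟩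
        · apply Sym2.eq_iff.mpr
          right
          exact ⟨Prod.ext rfl (Fin.ext (by simpa using ha3)),
            Prod.ext h1eq.symm (Fin.ext (by simpa using hb4))⟩
        · apply Sym2.eq_iff.mpr
          left
          exact ⟨Prod.ext rfl (Fin.ext (by simpa using ha4)),
            Prod.ext h1eq.symm (Fin.ext (by simpa using hb3))⟩
  -- the partition
  set ML := M.filter (fun e => e ≠ e0 ∧ ∀ v ∈ e, v.2.val ≤ 1) with hMLdef
  set MR := M.filter (fun e => e ≠ e0 ∧ ∀ v ∈ e, 3 ≤ v.2.val) with hMRdef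
  have hcover : M ⊆ insert e0 (ML ∪ MR) := by
    intro e
    induction e using Sym2.ind with
    | _ a b =>
    intro he
    by_cases hne : s(a,b) = e0
    · simp [hne]
    have hab : (stackedBook m 5).Adj a b := hsub he
    have ha2 := hlayer2 _ he hne a (Sym2.mem_mk_left a b)
    have hb2 := hlayer2 _ he hne b (Sym2.mem_mk_right a b)
    have hlink : a.2.val = b.2.val ∨ (a.2.val + 1 = b.2.val ∨ b.2.val + 1 = a.2.val) := by
      rw [sb_adj] at hab
      rcases hab with ⟨_, _, h⟩ | ⟨_, h⟩
      · exact Or.inl (by rw [h])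
      · exact Or.inr h
    have hsplit : (a.2.val ≤ 1 ∧ b.2.val ≤ 1) ∨ (3 ≤ a.2.val ∧ 3 ≤ b.2.val) := by omega
    rw [Finset.mem_insert, Finset.mem_union, hMLdef, hMRdef,
      Finset.mem_filter, Finset.mem_filter]
    rcases hsplit with ⟨h1, h2⟩ | ⟨h1, h2⟩
    · exact Or.inr (Or.inl ⟨he, hne, fun v hv => by
        rcases Sym2.mem_iff.mp hv with rfl | rfl <;> assumption⟩)
    · exact Or.inr (Or.inr ⟨he, hne, fun v hv => by
        rcases Sym2.mem_iff.mp hv with rfl | rfl <;> assumption⟩)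
  have hcard : M.card ≤ 1 + (ML.card + MR.card) := by
    calc M.card ≤ (insert e0 (ML ∪ MR)).card := Finset.card_le_card hcover
      _ ≤ (ML ∪ MR).card + 1 := Finset.card_insert_le _ _
      _ ≤ 1 + (ML.card + MR.card) := by
          have := Finset.card_union_le ML MR
          omega
  have hpairL : ∀ e₁ ∈ ML, ∀ e₂ ∈ ML, e₁ ≠ e₂ → ∀ u ∈ e₁, ∀ v ∈ e₂,
      u ≠ v ∧ ¬(stackedBook m 5).Adj u v := fun e₁ h₁ e₂ h₂ =>
    hind e₁ (Finset.mem_of_mem_filter _ h₁) e₂ (Finset.mem_of_mem_filter _ h₂)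
  have hpairR : ∀ e₁ ∈ MR, ∀ e₂ ∈ MR, e₁ ≠ e₂ → ∀ u ∈ e₁, ∀ v ∈ e₂,
      u ≠ v ∧ ¬(stackedBook m 5).Adj u v := fun e₁ h₁ e₂ h₂ =>
    hind e₁ (Finset.mem_of_mem_filter _ h₁) e₂ (Finset.mem_of_mem_filter _ h₂)
  have hshapeL : ∀ e ∈ ML, ((z0,(0:Fin 5)) ∈ e ∨
      ∃ i : Fin m, i.val ≠ 0 ∧ e = s((i,(0:Fin 5)),(i,(1:Fin 5)))) := by
    intro e he
    rw [hMLdef, Finset.mem_filter] at he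
    exact shapeL e he.1 he.2.1 he.2.2
  have hshapeR : ∀ e ∈ MR, ((z0,(4:Fin 5)) ∈ e ∨
      ∃ i : Fin m, i.val ≠ 0 ∧ e = s((i,(4:Fin 5)),(i,(3:Fin 5)))) := by
    intro e he
    rw [hMRdef, Finset.mem_filter] at he
    exact shapeR e he.1 he.2.1 he.2.2
  have hkeyL : ∀ e ∈ ML, e ≠ e0 ∧ e ∈ M := by
    intro e he; rw [hMLdef, Finset.mem_filter] at he; exact ⟨he.2.1, he.1⟩
  have hkeyR : ∀ e ∈ MR, e ≠ e0 ∧ e ∈ M := by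
    intro e he; rw [hMRdef, Finset.mem_filter] at he; exact ⟨he.2.1, he.1⟩
  -- case analysis on the partner w of the center
  rw [sb_adj] at hcw
  have hc2 : c.2.val = 2 := rfl
  have hc1 : c.1 = z0 := rfl
  rcases hcw with ⟨hne1, _, h2eq⟩ | ⟨h1eq, hstep⟩
  · -- Case A : w = (i0, 2) with i0 ≠ z0
    have hw2 : w.2.val = 2 := by rw [← h2eq]; exact hc2
    have hiz : w.1 ≠ z0 := fun h => hne1 (by rw [hc1, h])
    set S : Finset (Fin m) := (Finset.univ.erase z0).erase w.1 with hSdef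
    have hmemS : w.1 ∈ Finset.univ.erase z0 := Finset.mem_erase.mpr ⟨hiz, Finset.mem_univ _⟩
    have hcS : S.card = m - 2 := by
      rw [hSdef, Finset.card_erase_of_mem hmemS,
        Finset.card_erase_of_mem (Finset.mem_univ _), Finset.card_univ, Fintype.card_fin]
      omega
    have h1S : 1 ≤ S.card := by omega
    have hSL : ∀ i : Fin m, i.val ≠ 0 → s((i,(0:Fin 5)),(i,(1:Fin 5))) ∈ ML → i ∈ S := by
      intro i hi0 hmem
      obtain ⟨hne, heM⟩ := hkeyL _ hmem
      rw [hSdef, Finset.mem_erase, Finset.mem_erase]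
      refine ⟨?_, fun h => hi0 (by rw [h]), Finset.mem_univ _⟩
      intro h
      apply (key _ heM hne (i,(1:Fin 5)) (Sym2.mem_mk_right _ _)).2.2
      rw [sb_adj]; right
      exact ⟨h, Or.inl (by simp [hw2]; all_goals rfl)⟩
    have hSR : ∀ i : Fin m, i.val ≠ 0 → s((i,(4:Fin 5)),(i,(3:Fin 5))) ∈ MR → i ∈ S := by
      intro i hi0 hmem
      obtain ⟨hne, heM⟩ := hkeyR _ hmem
      rw [hSdef, Finset.mem_erase, Finset.mem_erase]
      refine ⟨?_, fun h => hi0 (by rw [h]), Finset.mem_univ _⟩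
      intro h
      apply (key _ heM hne (i,(3:Fin 5)) (Sym2.mem_mk_right _ _)).2.2
      rw [sb_adj]; right
      exact ⟨h, Or.inr (by simp [hw2]; all_goals rfl)⟩
    have hML := side_card ML z0 hz0 0 1 hshapeL hpairL S hSL h1S
    have hMR := side_card MR z0 hz0 4 3 hshapeR hpairR S hSR h1S
    omega
  · -- Case B/C : w = (z0, 1) or w = (z0, 3)
    have hstep' : 2 + 1 = w.2.val ∨ w.2.val + 1 = 2 := hstep
    set S : Finset (Fin m) := Finset.univ.erase z0 with hSdef
    have hcS : S.card = m - 1 := by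
      rw [hSdef, Finset.card_erase_of_mem (Finset.mem_univ _), Finset.card_univ,
        Fintype.card_fin]
    have h1S : 1 ≤ S.card := by omega
    have hSL : ∀ i : Fin m, i.val ≠ 0 → s((i,(0:Fin 5)),(i,(1:Fin 5))) ∈ ML → i ∈ S := by
      intro i hi0 _
      exact Finset.mem_erase.mpr ⟨fun h => hi0 (by rw [h]), Finset.mem_univ _⟩
    have hSR : ∀ i : Fin m, i.val ≠ 0 → s((i,(4:Fin 5)),(i,(3:Fin 5))) ∈ MR → i ∈ S := by
      intro i hi0 _
      exact Finset.mem_erase.mpr ⟨fun h => hi0 (by rw [h]), Finset.mem_univ _⟩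
    rcases hstep' with h3 | h1
    · -- Case C : w = (z0, 3); show MR = ∅
      have hw3 : w.2.val = 3 := by omega
      have hMRempty : MR = ∅ := by
        rw [Finset.eq_empty_iff_forall_notMem]
        intro e he
        obtain ⟨hne, heM⟩ := hkeyR e he
        rcases hshapeR e he with hz | ⟨i, hi0, rfl⟩
        · apply (key e heM hne _ hz).2.2
          rw [sb_adj]; right
          exact ⟨h1eq, Or.inr (by simp [hw3]; all_goals rfl)⟩
        · apply (key _ heM hne (i,(3:Fin 5)) (Sym2.mem_mk_right _ _)).2.2
          rw [sb_adj]; left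
          refine ⟨?_, Or.inr ?_, ?_⟩
          · intro h; exact hi0 (by simp only [show i = w.1 from h, ← h1eq]; all_goals exact hz0)
          · simp only [← h1eq]; all_goals exact hz0
          · exact Fin.ext (by simp [hw3]; all_goals rfl)
      have hML := side_card ML z0 hz0 0 1 hshapeL hpairL S hSL h1S
      have : MR.card = 0 := by simp [hMRempty]
      omega
    · -- Case B : w = (z0, 1); show ML = ∅
      have hw1 : w.2.val = 1 := by omega
      have hMLempty : ML = ∅ := by
        rw [Finset.eq_empty_iff_forall_notMem]
        intro e he
        obtain ⟨hne, heM⟩ := hkeyL e he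
        rcases hshapeL e he with hz | ⟨i, hi0, rfl⟩
        · apply (key e heM hne _ hz).2.2
          rw [sb_adj]; right
          exact ⟨h1eq, Or.inl (by simp [hw1]; all_goals rfl)⟩
        · apply (key _ heM hne (i,(1:Fin 5)) (Sym2.mem_mk_right _ _)).2.2
          rw [sb_adj]; left
          refine ⟨?_, Or.inr ?_, ?_⟩
          · intro h; exact hi0 (by simp only [show i = w.1 from h, ← h1eq]; all_goals exact hz0)
          · simp only [← h1eq]; all_goals exact hz0
          · exact Fin.ext (by simp [hw1]; all_goals rfl)
      have hMR := side_card MR z0 hz0 4 3 hshapeR hpairR S hSR h1S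
      have : ML.card = 0 := by simp [hMLempty]
      omega
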